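/- Suppose that for each school s the choice function C_s is consistent with the priority profile ≿_s, and ≿_s satisfies PD. If a matching μ is C-stable, then μ is stable. -/
import Mathlib


open Finset

variable {I T S : Type*}

/-- `a` (a student or the null student `none`) is not a member of `J`. -/
def NotInOpt (a : Option I) (J : Finset I) : Prop := ∀ i ∈ a, i ∉ J

/-- Strict part `≻` of the weak priority order `ge = ≿`. -/
def StrictP (ge : Finset I → Option I → Option I → Prop) (J : Finset I) (a b : Option I) :
    Prop :=
  ge J a b ∧ ¬ ge J b a

/-- Symmetric part `∼` of the weak priority order `ge = ≿`. -/
def SimP (ge : Finset I → Option I → Option I → Prop) (J : Finset I) (a b : Option I) :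
    Prop :=
  ge J a b ∧ ge J b a

/-- `tcnt τ J a` = number of students in `J` of the same type as `a` (0 for the null student). -/
def tcnt [DecidableEq T] (τ : I → T) (J : Finset I) : Option I → ℕ
  | none => 0
  | some i => (J.filter fun x => τ x = τ i).card

/-- Completeness of each `≿ₛᴶ` on `(I∖J) ∪ {∅}`. -/
def CompleteP (q : ℕ) (ge : Finset I → Option I → Option I → Prop) : Prop :=
  ∀ J : Finset I, J.card < q → ∀ a b : Option I, NotInOpt a J → NotInOpt b J →
    ge J a b ∨ ge J b a

/-- Transitivity of each `≿ₛᴶ` on `(I∖J) ∪ {∅}`. -/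
def TransP (q : ℕ) (ge : Finset I → Option I → Option I → Prop) : Prop :=
  ∀ J : Finset I, J.card < q → ∀ a b c : Option I,
    NotInOpt a J → NotInOpt b J → NotInOpt c J → ge J a b → ge J b c → ge J a c

/-- Antisymmetry of each `≿ₛᴶ` (so that it is a linear order). -/
def AntisymP (q : ℕ) (ge : Finset I → Option I → Option I → Prop) : Prop :=
  ∀ J : Finset I, J.card < q → ∀ a b : Option I, NotInOpt a J → NotInOpt b J →
    ge J a b → ge J b a → a = b

/-- PD (preference for diversity). -/
def PD [DecidableEq T] (τ : I → T) (q : ℕ)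
    (ge : Finset I → Option I → Option I → Prop) : Prop :=
  ∀ J J' : Finset I, ∀ a b : Option I,
    J.card < q → J'.card < q →
    NotInOpt a J → NotInOpt b J → NotInOpt a J' → NotInOpt b J' →
    tcnt τ J' a ≤ tcnt τ J a → tcnt τ J b ≤ tcnt τ J' b →
    (StrictP ge J a b → StrictP ge J' a b) ∧ (ge J a b → ge J' a b)

/-- WO (within-type ordering). -/
def WO [DecidableEq T] (τ : I → T) (q : ℕ)
    (ge : Finset I → Option I → Option I → Prop) : Prop :=
  ∀ J J' : Finset I, ∀ i j : I,
    J.card < q → J'.card < q →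
    i ∉ J → j ∉ J → i ∉ J' → j ∉ J' → τ i = τ j →
    (StrictP ge J (some i) (some j) → StrictP ge J' (some i) (some j)) ∧
    (ge J (some i) (some j) → ge J' (some i) (some j))

/-- DC (distributional consistency of WO). -/
def DC [DecidableEq I] [DecidableEq T] (τ : I → T) (q : ℕ)
    (ge : Finset I → Option I → Option I → Prop) : Prop :=
  ∀ J : Finset I, ∀ i j : I, ∀ k : Option I,
    J.card + 1 < q → i ≠ j → i ∉ J → j ∉ J → NotInOpt k J →
    k ≠ some i → k ≠ some j → τ i = τ j → ge J (some i) (some j) →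
    (StrictP ge (insert i J) (some j) k → StrictP ge (insert j J) (some i) k) ∧
    (SimP ge (insert i J) (some j) k → SimP ge (insert j J) (some i) k) ∧
    (StrictP ge (insert i J) k (some j) → StrictP ge (insert j J) k (some i))

/-- The choice function `C` is consistent with the priority profile `ge = ≿ₛ`. -/
def ConsistentP [DecidableEq I] (q : ℕ)
    (ge : Finset I → Option I → Option I → Prop) (C : Finset I → Finset I) : Prop :=
  ∀ J : Finset I,
    (∀ i ∈ C J,
      (∀ j ∈ J \ C J, ge ((C J).erase i) (some i) (some j)) ∧
        ge ((C J).erase i) (some i) none) ∧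
    ((C J).card < q → (C J).card < J.card →
      ∀ j ∈ J \ C J, StrictP ge (C J) none (some j))

/-- `C` is substitutable. -/
def SubstitutableP [DecidableEq I] (C : Finset I → Finset I) : Prop :=
  ∀ (J : Finset I) (i j : I), j ∉ J → i ∈ C (insert j J) → i ∈ C J

/-- The set of students assigned to school `s` under the matching `μ`. -/
def assignedTo [Fintype I] [DecidableEq I] [DecidableEq S]
    (μ : I → Option S) (s : S) : Finset I :=
  Finset.univ.filter fun i => μ i = some s

/-- Weak preference `R_i` induced by the strict preference `P_i`. -/
def Rpref (P : I → Option S → Option S → Prop) (i : I) (a b : Option S) : Prop :=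
  P i a b ∨ a = b

/-- `μ` is non-wasteful. -/
def NonWastefulM [Fintype I] [DecidableEq I] [DecidableEq S] (q : S → ℕ)
    (ge : S → Finset I → Option I → Option I → Prop)
    (P : I → Option S → Option S → Prop) (μ : I → Option S) : Prop :=
  ∀ i s, P i (some s) (μ i) →
    StrictP (ge s) (assignedTo μ s) none (some i) ∨ (assignedTo μ s).card = q s

/-- `μ` is individually rational. -/
def IndRationalM [Fintype I] [DecidableEq I] [DecidableEq S]
    (ge : S → Finset I → Option I → Option I → Prop)
    (P : I → Option S → Option S → Prop) (μ : I → Option S) : Prop :=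
  (∀ i, Rpref P i (μ i) none) ∧
    ∀ s, ∀ i ∈ assignedTo μ s, ge s ((assignedTo μ s).erase i) (some i) none

/-- `μ` is fair: no student has justified envy. -/
def FairM [Fintype I] [DecidableEq I] [DecidableEq S]
    (ge : S → Finset I → Option I → Option I → Prop)
    (P : I → Option S → Option S → Prop) (μ : I → Option S) : Prop :=
  ¬ ∃ i j s, μ j = some s ∧ P i (some s) (μ i) ∧
      StrictP (ge s) ((assignedTo μ s).erase j) (some i) (some j)

/-- `μ` is stable. -/
def StableM [Fintype I] [DecidableEq I] [DecidableEq S] (q : S → ℕ)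
    (ge : S → Finset I → Option I → Option I → Prop)
    (P : I → Option S → Option S → Prop) (μ : I → Option S) : Prop :=
  NonWastefulM q ge P μ ∧ IndRationalM ge P μ ∧ FairM ge P μ

/-- `μ` is `C`-stable. -/
def CStableM [Fintype I] [DecidableEq I] [DecidableEq S]
    (C : S → Finset I → Finset I)
    (P : I → Option S → Option S → Prop) (μ : I → Option S) : Prop :=
  (∀ i, Rpref P i (μ i) none) ∧
    (∀ s, assignedTo μ s = C s (assignedTo μ s)) ∧
    ¬ ∃ s i, μ i ≠ some s ∧ P i (some s) (μ i) ∧ i ∈ C s (insert i (assignedTo μ s))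

lemma tcnt_mono [DecidableEq T] (τ : I → T) {J J' : Finset I} (h : J ⊆ J') (a : Option I) :
    tcnt τ J a ≤ tcnt τ J' a := by
  cases a with
  | none => simp [tcnt]
  | some i => exact Finset.card_le_card (Finset.filter_subset_filter _ h)

lemma notInOpt_none {J : Finset I} : NotInOpt (none : Option I) J := by
  intro x hx; simp at hx

lemma notInOpt_some {J : Finset I} {i : I} (h : i ∉ J) : NotInOpt (some i) J := by
  intro x hx; simp at hx; subst hx; exact h

/-- **Lemma 3.** If each `Cₛ` is consistent with `≿ₛ` and each `≿ₛ` satisfies PD, then every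
`C`-stable matching is stable. -/
theorem lemma3 [Fintype I] [DecidableEq I] [DecidableEq T] [DecidableEq S]
    (τ : I → T) (q : S → ℕ)
    (ge : S → Finset I → Option I → Option I → Prop)
    (hcomp : ∀ s, CompleteP (q s) (ge s)) (htr : ∀ s, TransP (q s) (ge s))
    (hPD : ∀ s, PD τ (q s) (ge s))
    (C : S → Finset I → Finset I)
    (hsub : ∀ s J, C s J ⊆ J) (hcardC : ∀ s J, (C s J).card ≤ q s)
    (hcons : ∀ s, ConsistentP (q s) (ge s) (C s))
    (P : I → Option S → Option S → Prop)
    (hPasym : ∀ i a b, P i a b → ¬ P i b a)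
    (hPtrans : ∀ i a b c, P i a b → P i b c → P i a c)
    (hPtotal : ∀ i a b, a ≠ b → P i a b ∨ P i b a)
    (μ : I → Option S) (hcap : ∀ s, (assignedTo μ s).card ≤ q s)
    (h : CStableM C P μ) :
    StableM q ge P μ := by
  obtain ⟨hIR1, hfix, hblock⟩ := h
  have hmem : ∀ (i : I) (s : S), i ∈ assignedTo μ s ↔ μ i = some s := by
    intro i s; simp [assignedTo]
  refine ⟨?_, ⟨hIR1, ?_⟩, ?_⟩
  · -- NonWasteful
    intro i s hPi
    by_cases hq : (assignedTo μ s).card = q s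
    · exact Or.inr hq
    left
    set J := assignedTo μ s with hJdef
    have hJq : J.card < q s := lt_of_le_of_ne (hcap s) hq
    have hne : μ i ≠ some s := by
      intro he; rw [he] at hPi; exact hPasym i _ _ hPi hPi
    have hiJ : i ∉ J := fun hc => hne ((hmem i s).mp hc)
    have hiC : i ∉ C s (insert i J) := fun hc => hblock ⟨s, i, hne, hPi, hc⟩
    have hC'sub : C s (insert i J) ⊆ insert i J := hsub s _
    have hC'J : C s (insert i J) ⊆ J := by
      intro x hx
      rcases Finset.mem_insert.mp (hC'sub hx) with h1 | h1
      · exact absurd (h1 ▸ hx) hiC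
      · exact h1
    have hcard' : (C s (insert i J)).card < q s := by
      rcases lt_or_eq_of_le (hcardC s (insert i J)) with h1 | h1
      · exact h1
      · exfalso
        have hJ'card : (insert i J).card ≤ q s := by
          rw [Finset.card_insert_of_notMem hiJ]; omega
        have heq : C s (insert i J) = insert i J :=
          Finset.eq_of_subset_of_card_le hC'sub (by omega)
        exact hiC (by rw [heq]; exact Finset.mem_insert_self i J)
    have hltJ' : (C s (insert i J)).card < (insert i J).card := by
      rw [Finset.card_insert_of_notMem hiJ]
      exact Nat.lt_succ_of_le (Finset.card_le_card hC'J)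
    have hstrict := (hcons s (insert i J)).2 hcard' hltJ' i
      (Finset.mem_sdiff.mpr ⟨Finset.mem_insert_self i J, hiC⟩)
    exact (hPD s (C s (insert i J)) J none (some i) hcard' hJq
      notInOpt_none (notInOpt_some hiC) notInOpt_none (notInOpt_some hiJ)
      (by simp [tcnt]) (tcnt_mono τ hC'J _)).1 hstrict
  · -- IR (second part)
    intro s i hi
    have hi' : i ∈ C s (assignedTo μ s) := (hfix s) ▸ hi
    have := ((hcons s (assignedTo μ s)).1 i hi').2
    rwa [← hfix s] at this
  · -- Fair
    rintro ⟨i, j, s, hjs, hPi, hij⟩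
    set J := assignedTo μ s with hJdef
    have hjJ : j ∈ J := (hmem j s).mpr hjs
    have hne : μ i ≠ some s := by
      intro he; rw [he] at hPi; exact hPasym i _ _ hPi hPi
    have hiJ : i ∉ J := fun hc => hne ((hmem i s).mp hc)
    have hiC : i ∉ C s (insert i J) := fun hc => hblock ⟨s, i, hne, hPi, hc⟩
    have hC'sub : C s (insert i J) ⊆ insert i J := hsub s _
    have hC'J : C s (insert i J) ⊆ J := by
      intro x hx
      rcases Finset.mem_insert.mp (hC'sub hx) with h1 | h1
      · exact absurd (h1 ▸ hx) hiC
      · exact h1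
    have hiJ' : i ∈ (insert i J) \ (C s (insert i J)) :=
      Finset.mem_sdiff.mpr ⟨Finset.mem_insert_self i J, hiC⟩
    have hJecard : (J.erase j).card < q s := by
      have h1 := Finset.card_erase_of_mem hjJ
      have h2 : 1 ≤ J.card := Finset.card_pos.mpr ⟨j, hjJ⟩
      have h3 := hcap s
      rw [← hJdef] at h3
      omega
    have hiJe : i ∉ J.erase j := fun hc => hiJ (Finset.mem_of_mem_erase hc)
    have hjJe : j ∉ J.erase j := Finset.notMem_erase j J
    rcases lt_or_eq_of_le (hcardC s (insert i J)) with hcard' | hcard'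
    · -- |C'| < q s
      have hltJ' : (C s (insert i J)).card < (insert i J).card := by
        rw [Finset.card_insert_of_notMem hiJ]
        exact Nat.lt_succ_of_le (Finset.card_le_card hC'J)
      have hstrict := (hcons s (insert i J)).2 hcard' hltJ' i hiJ'
      -- derive i ≻_{J∖{j}} ∅
      have hjge : ge s (J.erase j) (some j) none := by
        have hj' : j ∈ C s (assignedTo μ s) := (hfix s) ▸ hjJ
        have := ((hcons s (assignedTo μ s)).1 j hj').2
        rwa [← hfix s] at this
      have hi0 : StrictP (ge s) (J.erase j) (some i) none := by
        refine ⟨htr s (J.erase j) hJecard (some i) (some j) none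
          (notInOpt_some hiJe) (notInOpt_some hjJe) notInOpt_none hij.1 hjge, ?_⟩
        intro hni
        exact hij.2 (htr s (J.erase j) hJecard (some j) none (some i)
          (notInOpt_some hjJe) notInOpt_none (notInOpt_some hiJe) hjge hni)
      by_cases hcnt : tcnt τ (C s (insert i J)) (some i) ≤ tcnt τ (J.erase j) (some i)
      · -- transfer ∅ ≻_{C'} i to base J∖{j}
        have := (hPD s (C s (insert i J)) (J.erase j) none (some i) hcard' hJecard
          notInOpt_none (notInOpt_some hiC) notInOpt_none (notInOpt_some hiJe)
          (by simp [tcnt]) hcnt).1 hstrict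
        exact this.2 hi0.1
      · -- forced: τ j = τ i, j ∈ C', equal type counts
        push_neg at hcnt
        have hsubf : (C s (insert i J)).filter (fun x => τ x = τ i) ⊆
            J.filter (fun x => τ x = τ i) := Finset.filter_subset_filter _ hC'J
        have hfe : (J.erase j).filter (fun x => τ x = τ i) =
            (J.filter (fun x => τ x = τ i)).erase j := Finset.filter_erase _ _ _
        have hτ : τ j = τ i := by
          by_contra hτ
          apply absurd hcnt
          simp only [tcnt, not_lt, hfe]
          calc ((C s (insert i J)).filter (fun x => τ x = τ i)).card
              ≤ (J.filter (fun x => τ x = τ i)).card := Finset.card_le_card hsubf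
            _ = ((J.filter (fun x => τ x = τ i)).erase j).card := by
                rw [Finset.erase_eq_of_notMem (by simp [hτ])]
        have hjf : j ∈ J.filter (fun x => τ x = τ i) := Finset.mem_filter.mpr ⟨hjJ, hτ⟩
        have hcnteq : ((C s (insert i J)).filter (fun x => τ x = τ i)).card =
            (J.filter (fun x => τ x = τ i)).card := by
          have h1 := Finset.card_le_card hsubf
          have h2 : ((J.filter (fun x => τ x = τ i)).erase j).card =
              (J.filter (fun x => τ x = τ i)).card - 1 := Finset.card_erase_of_mem hjf
          have h3 : tcnt τ (J.erase j) (some i) =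
              (J.filter (fun x => τ x = τ i)).card - 1 := by
            simp only [tcnt, hfe, h2]
          have h4 : tcnt τ (C s (insert i J)) (some i) =
              ((C s (insert i J)).filter (fun x => τ x = τ i)).card := rfl
          have h5 : 1 ≤ (J.filter (fun x => τ x = τ i)).card :=
            Finset.card_pos.mpr ⟨j, hjf⟩
          omega
        have hfeq : (C s (insert i J)).filter (fun x => τ x = τ i) =
            J.filter (fun x => τ x = τ i) :=
          Finset.eq_of_subset_of_card_le hsubf (le_of_eq hcnteq.symm)
        have hjC : j ∈ C s (insert i J) := (Finset.mem_filter.mp (hfeq ▸ hjf)).1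
        have hgeji : ge s ((C s (insert i J)).erase j) (some j) (some i) :=
          ((hcons s (insert i J)).1 j hjC).1 i hiJ'
        have hiCe : i ∉ (C s (insert i J)).erase j :=
          fun hc => hiC (Finset.mem_of_mem_erase hc)
        have hjCe : j ∉ (C s (insert i J)).erase j := Finset.notMem_erase _ _
        have hCecard : ((C s (insert i J)).erase j).card < q s :=
          lt_of_le_of_lt (Finset.card_le_card (Finset.erase_subset _ _)) hcard'
        -- type counts of τ i on C'∖{j} and J∖{j} agree
        have hteq : ∀ a : I, τ a = τ i →
            tcnt τ ((C s (insert i J)).erase j) (some a) =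
            tcnt τ (J.erase j) (some a) := by
          intro a ha
          have e1 : ((C s (insert i J)).erase j).filter (fun x => τ x = τ a) =
              ((C s (insert i J)).filter (fun x => τ x = τ i)).erase j := by
            rw [Finset.filter_erase]; congr 1; simp [ha]
          have e2 : (J.erase j).filter (fun x => τ x = τ a) =
              (J.filter (fun x => τ x = τ i)).erase j := by
            rw [Finset.filter_erase]; congr 1; simp [ha]
          simp only [tcnt, e1, e2, hfeq]
        have := (hPD s ((C s (insert i J)).erase j) (J.erase j) (some j) (some i)
          hCecard hJecard (notInOpt_some hjCe) (notInOpt_some hiCe)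
          (notInOpt_some hjJe) (notInOpt_some hiJe)
          (le_of_eq (hteq j hτ).symm) (le_of_eq (hteq i rfl))).2 hgeji
        exact hij.2 this
    · -- |C'| = q s : then C' = J and consistency at insert i J contradicts i ≻ j
      have hJq : J.card ≤ q s := hcap s
      have hCJ : C s (insert i J) = J := by
        apply Finset.eq_of_subset_of_card_le hC'J
        omega
      have hjC : j ∈ C s (insert i J) := by rw [hCJ]; exact hjJ
      have hgeji := ((hcons s (insert i J)).1 j hjC).1 i hiJ'
      rw [hCJ] at hgeji
      exact hij.2 hgeji
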